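/- For every ρ ∈ (0,1) and every integer k ≥ 1, the equilibrium weights satisfy p_k^{(ρ)} ≤ √( ρ · p_{k−1}^{(ρ)} ), and consequently p_k^{(ρ)} ≤ ( ρ(1−ρ) )^{1/2^k}. -/
import Mathlib


open Filter Finset

namespace MullerRatchet15

/-- Auxiliary recursion computing the pair `(p_k, Σ_{ℓ≤k} p_ℓ)` of the equilibrium
type-frequency weights of the tournament ratchet. -/
noncomputable def pAux (ρ : ℝ) : ℕ → ℝ × ℝ
  | 0 => (1 - ρ, 1 - ρ)
  | k+1 =>
    let a := ρ - 1 + 2 * (pAux ρ k).2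
    let p := -(1/2) * a + Real.sqrt ((1/4) * a^2 + ρ * (pAux ρ k).1)
    (p, (pAux ρ k).2 + p)

/-- The equilibrium weight `p_k^{(ρ)}`. -/
noncomputable def pseq (ρ : ℝ) (k : ℕ) : ℝ := (pAux ρ k).1

lemma sqrt_add_le (x y : ℝ) (hx : 0 ≤ x) (hy : 0 ≤ y) :
    Real.sqrt (x + y) ≤ Real.sqrt x + Real.sqrt y := by
  have h : x + y ≤ (Real.sqrt x + Real.sqrt y) ^ 2 := by
    have hx' := Real.sq_sqrt hx
    have hy' := Real.sq_sqrt hy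
    have : 0 ≤ Real.sqrt x * Real.sqrt y :=
      mul_nonneg (Real.sqrt_nonneg x) (Real.sqrt_nonneg y)
    nlinarith
  calc Real.sqrt (x + y) ≤ Real.sqrt ((Real.sqrt x + Real.sqrt y) ^ 2) :=
        Real.sqrt_le_sqrt h
    _ = Real.sqrt x + Real.sqrt y :=
        Real.sqrt_sq (by positivity)

lemma pAux_basic (ρ : ℝ) (h0 : 0 < ρ) (h1 : ρ < 1) (k : ℕ) :
    0 ≤ (pAux ρ k).1 ∧ 1 - ρ ≤ (pAux ρ k).2 := by
  induction k with
  | zero => simp [pAux]; linarith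
  | succ k ih =>
    obtain ⟨hp, hS⟩ := ih
    have ha : 0 ≤ ρ - 1 + 2 * (pAux ρ k).2 := by linarith
    have hnn : 0 ≤ -(1/2) * (ρ - 1 + 2 * (pAux ρ k).2) +
        Real.sqrt ((1/4) * (ρ - 1 + 2 * (pAux ρ k).2)^2 + ρ * (pAux ρ k).1) := by
      have h2 : Real.sqrt ((1/4) * (ρ - 1 + 2 * (pAux ρ k).2)^2) ≤
          Real.sqrt ((1/4) * (ρ - 1 + 2 * (pAux ρ k).2)^2 + ρ * (pAux ρ k).1) := by
        apply Real.sqrt_le_sqrt; nlinarith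
      have h3 : Real.sqrt ((1/4) * (ρ - 1 + 2 * (pAux ρ k).2)^2) =
          (1/2) * (ρ - 1 + 2 * (pAux ρ k).2) := by
        rw [show (1/4) * (ρ - 1 + 2 * (pAux ρ k).2)^2 =
            ((1/2) * (ρ - 1 + 2 * (pAux ρ k).2))^2 by ring]
        exact Real.sqrt_sq (by linarith)
      linarith
    constructor
    · show 0 ≤ (pAux ρ (k+1)).1
      simpa [pAux] using hnn
    · show 1 - ρ ≤ (pAux ρ (k+1)).2
      simp only [pAux]
      have := hnn
      linarith
  
lemma pseq_step (ρ : ℝ) (h0 : 0 < ρ) (h1 : ρ < 1) (k : ℕ) :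
    pseq ρ (k+1) ≤ Real.sqrt (ρ * pseq ρ k) := by
  obtain ⟨hp, hS⟩ := pAux_basic ρ h0 h1 k
  have ha : 0 ≤ ρ - 1 + 2 * (pAux ρ k).2 := by linarith
  have hsub := sqrt_add_le ((1/4) * (ρ - 1 + 2 * (pAux ρ k).2)^2) (ρ * (pAux ρ k).1)
    (by positivity) (by positivity)
  have h3 : Real.sqrt ((1/4) * (ρ - 1 + 2 * (pAux ρ k).2)^2) =
      (1/2) * (ρ - 1 + 2 * (pAux ρ k).2) := by
    rw [show (1/4) * (ρ - 1 + 2 * (pAux ρ k).2)^2 =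
        ((1/2) * (ρ - 1 + 2 * (pAux ρ k).2))^2 by ring]
    exact Real.sqrt_sq (by linarith)
  show (pAux ρ (k+1)).1 ≤ Real.sqrt (ρ * (pAux ρ k).1)
  simp only [pAux]
  linarith

lemma pseq_bound (ρ : ℝ) (h0 : 0 < ρ) (h1 : ρ < 1) (k : ℕ) (hk : 1 ≤ k) :
    pseq ρ k ≤ (ρ * (1 - ρ)) ^ (1 / (2:ℝ)^k) := by
  have hc : 0 < ρ * (1 - ρ) := by nlinarith
  induction k with
  | zero => omega
  | succ k ih =>
    rcases Nat.eq_or_lt_of_le hk with h | h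
    · -- k+1 = 1, i.e. k = 0
      have hk0 : k = 0 := by omega
      subst hk0
      have h1' := pseq_step ρ h0 h1 0
      have hp0 : pseq ρ 0 = 1 - ρ := rfl
      rw [hp0] at h1'
      calc pseq ρ 1 ≤ Real.sqrt (ρ * (1 - ρ)) := h1'
        _ = (ρ * (1 - ρ)) ^ (1 / (2:ℝ)^1) := by
            rw [Real.sqrt_eq_rpow]; norm_num
    · have hk' : 1 ≤ k := by omega
      have ih' := ih hk'
      have step := pseq_step ρ h0 h1 k
      obtain ⟨hp, _⟩ := pAux_basic ρ h0 h1 k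
      have hmul : ρ * pseq ρ k ≤ pseq ρ k := by
        have : ρ * pseq ρ k ≤ 1 * pseq ρ k := by
          apply mul_le_mul_of_nonneg_right (le_of_lt h1) hp
        linarith
      calc pseq ρ (k+1) ≤ Real.sqrt (ρ * pseq ρ k) := step
        _ ≤ Real.sqrt (pseq ρ k) := Real.sqrt_le_sqrt hmul
        _ ≤ Real.sqrt ((ρ * (1 - ρ)) ^ (1 / (2:ℝ)^k)) := Real.sqrt_le_sqrt ih'
        _ = (ρ * (1 - ρ)) ^ (1 / (2:ℝ)^(k+1)) := by
            rw [Real.sqrt_eq_rpow, ← Real.rpow_mul hc.le]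
            congr 1
            rw [pow_succ]
            ring

/-- For `ρ ∈ (0,1)` and `k ≥ 1`: `p_k^{(ρ)} ≤ √(ρ p_{k−1}^{(ρ)})`, and consequently
`p_k^{(ρ)} ≤ (ρ(1−ρ))^{1/2^k}`. -/
theorem statement15 (ρ : ℝ) (h0 : 0 < ρ) (h1 : ρ < 1) (k : ℕ) (hk : 1 ≤ k) :
    pseq ρ k ≤ Real.sqrt (ρ * pseq ρ (k-1)) ∧
    pseq ρ k ≤ (ρ * (1 - ρ)) ^ (1 / (2:ℝ)^k) := by
  constructor
  · obtain ⟨k, rfl⟩ := Nat.exists_eq_add_of_le hk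
    have := pseq_step ρ h0 h1 k
    rw [Nat.add_comm] at this
    simpa using this
  · exact pseq_bound ρ h0 h1 k hk

end MullerRatchet15
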